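/- arXiv:2602.00967 — 4 statements merged into one kernel-verified Lean document; each statement's English description precedes it below -/
import Mathlib

section
/- Let n ∈ ℕ and let T : ℝ[x₁,…,xₙ] → ℝ[x₁,…,xₙ] be a linear map. Then there exists a unique family of polynomials (q_α)_{α∈ℕ₀ⁿ} in ℝ[x₁,…,xₙ] such that for every p ∈ ℝ[x₁,…,xₙ] one has T p = Σ_{α∈ℕ₀ⁿ} q_α · ∂^α p, where for each fixed p the sum has only finitely many nonzero terms (since ∂^α p = 0 whenever |α| exceeds the total degree of p). -/
open MvPolynomial MeasureTheory

/-- The iterated partial derivative operator `∂^α = ∂₁^{α₁}⋯∂ₙ^{αₙ}` on `ℝ[x₁,…,xₙ]`. -/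
noncomputable def pdPow {n : ℕ} (α : Fin n →₀ ℕ) :
    Module.End ℝ (MvPolynomial (Fin n) ℝ) :=
  (List.ofFn fun i : Fin n =>
    ((pderiv i : Derivation ℝ (MvPolynomial (Fin n) ℝ) (MvPolynomial (Fin n) ℝ)).toLinearMap) ^ (α i)).prod

namespace CanonRep

variable {n : ℕ}

lemma nat_aux (m k : ℕ) : m * (m - 1).descFactorial k = m.descFactorial (k + 1) := by
  cases m with
  | zero => simp
  | succ m => rw [Nat.succ_sub_one, Nat.succ_descFactorial_succ]

lemma pderiv_pow_monomial (i : Fin n) (k : ℕ) (β : Fin n →₀ ℕ) (c : ℝ) :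
    (((pderiv i : Derivation ℝ (MvPolynomial (Fin n) ℝ) (MvPolynomial (Fin n) ℝ)).toLinearMap) ^ k)
      (monomial β c)
    = monomial (β - Finsupp.single i k) (c * (β i).descFactorial k) := by
  induction k generalizing β c with
  | zero => simp
  | succ k ih =>
    rw [pow_succ, Module.End.mul_apply]
    have : ((pderiv i : Derivation ℝ (MvPolynomial (Fin n) ℝ) (MvPolynomial (Fin n) ℝ)).toLinearMap)
        (monomial β c) = monomial (β - Finsupp.single i 1) (c * β i) := by
      simp [pderiv_monomial]
    rw [this, ih]
    have h1 : ((β - Finsupp.single i 1 : Fin n →₀ ℕ)) i = β i - 1 := by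
      simp [Finsupp.tsub_apply]
    have h2 : β - Finsupp.single i 1 - Finsupp.single i k = β - Finsupp.single i (k + 1) := by
      rw [tsub_tsub, ← Finsupp.single_add, add_comm]
    rw [h1, h2]
    congr 1
    push_cast [← nat_aux (β i) k]
    ring

lemma list_prod_apply_monomial (α : Fin n →₀ ℕ) (l : List (Fin n)) (hl : l.Nodup)
    (β : Fin n →₀ ℕ) (c : ℝ) :
    (l.map fun i =>
      ((pderiv i : Derivation ℝ (MvPolynomial (Fin n) ℝ) (MvPolynomial (Fin n) ℝ)).toLinearMap) ^ (α i)).prod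
        (monomial β c)
    = monomial (β - (l.map fun j => Finsupp.single j (α j)).sum)
        (c * (l.map fun j => ((β j).descFactorial (α j) : ℝ)).prod) := by
  induction l generalizing β c with
  | nil => simp
  | cons i l ih =>
    have hi : i ∉ l := (List.nodup_cons.mp hl).1
    have hl' : l.Nodup := (List.nodup_cons.mp hl).2
    have hS : ((l.map fun j => Finsupp.single j (α j)).sum) i = 0 := by
      clear ih hl hl'
      induction l with
      | nil => simp
      | cons a t iht =>
        have ha : a ≠ i := by rintro rfl; exact hi (List.mem_cons_self)
        have ht := iht (fun h => hi (List.mem_cons_of_mem _ h))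
        simp [Finsupp.add_apply, Finsupp.single_apply, ha, ht]
    simp only [List.map_cons, List.prod_cons, Module.End.mul_apply, List.sum_cons]
    rw [ih hl', pderiv_pow_monomial]
    have hβ : ((β - (l.map fun j => Finsupp.single j (α j)).sum : Fin n →₀ ℕ)) i = β i := by
      simp [Finsupp.tsub_apply, hS]
    rw [hβ, tsub_tsub, add_comm ((l.map fun j => Finsupp.single j (α j)).sum)]
    ring_nf

lemma pdPow_apply_monomial (α β : Fin n →₀ ℕ) (c : ℝ) :
    pdPow α (monomial β c)
      = monomial (β - α) (c * ∏ i, ((β i).descFactorial (α i) : ℝ)) := by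
  have h1 : ((List.finRange n).map fun j => Finsupp.single j (α j)).sum = α := by
    rw [← List.ofFn_eq_map, List.sum_ofFn]
    exact Finsupp.univ_sum_single α
  have h2 : ((List.finRange n).map fun j => ((β j).descFactorial (α j) : ℝ)).prod
      = ∏ i, ((β i).descFactorial (α i) : ℝ) := by
    rw [← List.ofFn_eq_map, List.prod_ofFn]
  rw [pdPow, List.ofFn_eq_map,
    list_prod_apply_monomial α (List.finRange n) (List.nodup_finRange n) β c, h1, h2]

lemma pdPow_apply_monomial_of_not_le {α β : Fin n →₀ ℕ} (h : ¬ α ≤ β) (c : ℝ) :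
    pdPow α (monomial β c) = 0 := by
  rw [pdPow_apply_monomial]
  obtain ⟨i, hi⟩ : ∃ i, β i < α i := by
    by_contra hc
    push_neg at hc
    exact h (Finsupp.le_def.mpr hc)
  have : ((β i).descFactorial (α i) : ℝ) = 0 := by
    norm_cast
    exact Nat.descFactorial_eq_zero_iff_lt.mpr hi
  rw [Finset.prod_eq_zero (Finset.mem_univ i) this, mul_zero, map_zero]

lemma pdPow_apply_monomial_self (α : Fin n →₀ ℕ) :
    pdPow α (monomial α 1) = C (∏ i, ((α i).factorial : ℝ)) := by
  rw [pdPow_apply_monomial, tsub_self, one_mul]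
  simp [MvPolynomial.C_apply, Nat.descFactorial_self]

/-- Degree of a multi-index. -/
def deg (α : Fin n →₀ ℕ) : ℕ := ∑ i, α i

lemma deg_lt {β α : Fin n →₀ ℕ} (h : β < α) : deg β < deg α := by
  obtain ⟨hle, hne⟩ := lt_iff_le_and_ne.mp h
  obtain ⟨i, hi⟩ : ∃ i, β i ≠ α i := by
    by_contra hc
    push_neg at hc
    exact hne (Finsupp.ext hc)
  exact Finset.sum_lt_sum (fun j _ => Finsupp.le_def.mp hle j)
    ⟨i, Finset.mem_univ i, lt_of_le_of_ne (Finsupp.le_def.mp hle i) hi⟩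

variable (T : MvPolynomial (Fin n) ℝ →ₗ[ℝ] MvPolynomial (Fin n) ℝ)

/-- The canonical coefficients, defined by well-founded recursion. -/
noncomputable def qFam : (Fin n →₀ ℕ) → MvPolynomial (Fin n) ℝ
  | α => (∏ i, ((α i).factorial : ℝ))⁻¹ •
      (T (monomial α 1) -
        ∑ β ∈ (Finset.Iio α).attach, qFam β.1 * pdPow β.1 (monomial α 1))
  termination_by α => deg α
  decreasing_by exact deg_lt (Finset.mem_Iio.mp β.2)

lemma fact_prod_ne_zero (α : Fin n →₀ ℕ) : (∏ i, ((α i).factorial : ℝ)) ≠ 0 :=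
  Finset.prod_ne_zero_iff.mpr fun i _ => Nat.cast_ne_zero.mpr (Nat.factorial_ne_zero _)

/-- The key identity on monomials. -/
lemma T_monomial (γ : Fin n →₀ ℕ) :
    T (monomial γ 1) = ∑ β ∈ Finset.Iic γ, qFam T β * pdPow β (monomial γ 1) := by
  have key : (qFam T γ) * pdPow γ (monomial γ 1)
      = T (monomial γ 1) - ∑ β ∈ Finset.Iio γ, qFam T β * pdPow β (monomial γ 1) := by
    rw [qFam, pdPow_apply_monomial_self,
      Finset.sum_attach (Finset.Iio γ) (fun β => qFam T β * pdPow β (monomial γ 1)),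
      smul_mul_assoc, mul_comm _ (C (∏ i, ((γ i).factorial : ℝ))), ← smul_eq_C_mul,
      smul_smul, inv_mul_cancel₀ (fact_prod_ne_zero γ), one_smul]
  rw [← Finset.Iio_insert, Finset.sum_insert (by simp), key]
  ring

lemma support_subset (q : (Fin n →₀ ℕ) → MvPolynomial (Fin n) ℝ) (p : MvPolynomial (Fin n) ℝ) :
    (Function.support fun α => q α * pdPow α p)
      ⊆ ↑(p.support.biUnion fun β => Finset.Iic β) := by
  intro α hα
  simp only [Function.mem_support] at hα
  by_contra hc
  apply hα
  have hz : pdPow α p = 0 := by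
    conv_lhs => rw [p.as_sum]
    rw [map_sum]
    refine Finset.sum_eq_zero fun β hβ => pdPow_apply_monomial_of_not_le ?_ _
    intro hle
    exact hc (by simpa using Finset.mem_biUnion.mpr ⟨β, hβ, Finset.mem_Iic.mpr hle⟩)
  rw [hz, mul_zero]

lemma Tp_eq (p : MvPolynomial (Fin n) ℝ) :
    T p = ∑ α ∈ p.support.biUnion fun β => Finset.Iic β, qFam T α * pdPow α p := by
  have hR : ∀ α : Fin n →₀ ℕ, qFam T α * pdPow α p
      = ∑ β ∈ p.support, qFam T α * pdPow α (monomial β (coeff β p)) := by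
    intro α
    conv_lhs => rw [p.as_sum]
    rw [map_sum, Finset.mul_sum]
  calc T p = ∑ β ∈ p.support, T (monomial β (coeff β p)) := by
        conv_lhs => rw [p.as_sum]
        rw [map_sum]
    _ = ∑ β ∈ p.support, ∑ α ∈ p.support.biUnion fun β => Finset.Iic β,
          qFam T α * pdPow α (monomial β (coeff β p)) := by
        refine Finset.sum_congr rfl fun β hβ => ?_
        have hmono : (monomial β (coeff β p) : MvPolynomial (Fin n) ℝ)
            = coeff β p • monomial β 1 := by rw [smul_monomial, smul_eq_mul, mul_one]
        have hsub : Finset.Iic β ⊆ p.support.biUnion fun β => Finset.Iic β :=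
          fun α hα => Finset.mem_biUnion.mpr ⟨β, hβ, hα⟩
        have hzero : ∀ α ∈ p.support.biUnion fun β => Finset.Iic β,
            α ∉ Finset.Iic β → qFam T α * pdPow α (monomial β (coeff β p)) = 0 := by
          intro α _ hα
          rw [pdPow_apply_monomial_of_not_le (fun hle => hα (Finset.mem_Iic.mpr hle)), mul_zero]
        rw [← Finset.sum_subset hsub hzero, hmono, _root_.map_smul, T_monomial, Finset.smul_sum]
        refine Finset.sum_congr rfl fun α _ => ?_
        rw [_root_.map_smul, mul_smul_comm]
    _ = ∑ α ∈ p.support.biUnion fun β => Finset.Iic β, qFam T α * pdPow α p := by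
        rw [Finset.sum_comm]
        exact Finset.sum_congr rfl fun α _ => (hR α).symm

lemma unique_aux (q' : (Fin n →₀ ℕ) → MvPolynomial (Fin n) ℝ)
    (hq' : ∀ p : MvPolynomial (Fin n) ℝ,
        (Function.support fun α => q' α * pdPow α p).Finite ∧
        T p = ∑ᶠ α, q' α * pdPow α p) :
    ∀ γ, q' γ = qFam T γ := by
  have H : ∀ d : ℕ, ∀ γ : Fin n →₀ ℕ, deg γ < d → q' γ = qFam T γ := by
    intro d
    induction d with
    | zero => intro γ h; omega
    | succ d ihd =>
      intro γ hγ
      have hsupp : (Function.support fun α => q' α * pdPow α (monomial γ 1))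
          ⊆ ↑(Finset.Iic γ) := by
        intro α hα
        simp only [Function.mem_support] at hα
        by_contra hc
        exact hα (by
          rw [pdPow_apply_monomial_of_not_le (fun hle => hc (by simpa using hle)) 1, mul_zero])
      have h1 : T (monomial γ 1) = ∑ α ∈ Finset.Iic γ, q' α * pdPow α (monomial γ 1) := by
        rw [(hq' (monomial γ 1)).2]
        exact finsum_eq_sum_of_support_subset _ hsupp
      have h2 := T_monomial T γ
      rw [← Finset.Iio_insert, Finset.sum_insert (by simp)] at h1 h2
      have hIio : ∑ α ∈ Finset.Iio γ, q' α * pdPow α (monomial γ 1)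
          = ∑ α ∈ Finset.Iio γ, qFam T α * pdPow α (monomial γ 1) := by
        refine Finset.sum_congr rfl fun α hα => ?_
        rw [ihd α (lt_of_lt_of_le (deg_lt (Finset.mem_Iio.mp hα)) (Nat.lt_succ_iff.mp hγ))]
      have h3 : q' γ * pdPow γ (monomial γ 1) = qFam T γ * pdPow γ (monomial γ 1) := by
        have := h1.symm.trans h2
        rw [hIio] at this
        exact add_right_cancel this
      rw [pdPow_apply_monomial_self] at h3
      have hC : (C (∏ i, ((γ i).factorial : ℝ)) : MvPolynomial (Fin n) ℝ) ≠ 0 := by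
        rw [Ne, MvPolynomial.C_eq_zero]
        exact fact_prod_ne_zero γ
      exact mul_right_cancel₀ hC h3
  exact fun γ => H (deg γ + 1) γ (Nat.lt_succ_self _)

end CanonRep

/-- **Canonical representation.** Every linear map `T` on `ℝ[x₁,…,xₙ]` is of the form
`T = Σ_{α∈ℕ₀ⁿ} q_α ⬝ ∂^α` for a unique family of polynomials `(q_α)_α`, where for each
fixed `p` only finitely many of the terms `q_α ⬝ ∂^α p` are nonzero. -/
theorem canonical_representation (n : ℕ) (hn : 0 < n)
    (T : MvPolynomial (Fin n) ℝ →ₗ[ℝ] MvPolynomial (Fin n) ℝ) :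
    ∃! q : (Fin n →₀ ℕ) → MvPolynomial (Fin n) ℝ,
      ∀ p : MvPolynomial (Fin n) ℝ,
        (Function.support fun α => q α * pdPow α p).Finite ∧
        T p = ∑ᶠ α, q α * pdPow α p := by
  refine ⟨CanonRep.qFam T, fun p => ⟨?_, ?_⟩, fun q' hq' => funext (CanonRep.unique_aux T q' hq')⟩
  · exact Set.Finite.subset (p.support.biUnion fun β => Finset.Iic β).finite_toSet
      (CanonRep.support_subset _ p)
  · rw [finsum_eq_sum_of_support_subset _ (CanonRep.support_subset (CanonRep.qFam T) p)]
    exact CanonRep.Tp_eq T p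
end

section
/- Let n ∈ ℕ and let T : ℝ[x₁,…,xₙ] → ℝ[x₁,…,xₙ] be a linear map with canonical representation T = Σ_{α∈ℕ₀ⁿ} q_α · ∂^α, i.e., T p = Σ_α q_α · ∂^α p for all p, with unique polynomials q_α ∈ ℝ[x₁,…,xₙ]. Then the following are equivalent: (i) T maps the space of polynomials of total degree at most d into itself for every d ∈ ℕ₀; (ii) the total degree of q_α is at most |α| for every α ∈ ℕ₀ⁿ. -/
open MvPolynomial MeasureTheory

lemma pderiv_pow_monomial {n : ℕ} (i : Fin n) (k : ℕ) (β : Fin n →₀ ℕ) (c : ℝ) :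
    (((pderiv i : Derivation ℝ (MvPolynomial (Fin n) ℝ) (MvPolynomial (Fin n) ℝ)).toLinearMap) ^ k)
      (monomial β c)
    = monomial (β - Finsupp.single i k) (c * ((β i).descFactorial k : ℝ)) := by
  induction k with
  | zero => simp
  | succ k ih =>
    rw [pow_succ', Module.End.mul_apply, ih]
    simp only [Derivation.coeFn_coe, pderiv_monomial]
    rw [Nat.descFactorial_succ]
    congr 1
    · rw [tsub_tsub, ← Finsupp.single_add]
    · simp only [Pi.sub_apply, Finsupp.coe_tsub, Finsupp.single_eq_same]
      push_cast [Nat.cast_sub]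
      ring

lemma list_single_sum_apply {n : ℕ} (α : Fin n →₀ ℕ) (L : List (Fin n)) (i : Fin n)
    (hi : i ∉ L) : ((L.map fun j => Finsupp.single j (α j)).sum) i = 0 := by
  induction L with
  | nil => simp
  | cons j L ih =>
    simp only [List.mem_cons, not_or] at hi
    simp [Finsupp.add_apply, Finsupp.single_apply, Ne.symm hi.1, ih hi.2]

lemma list_prod_pderiv_monomial {n : ℕ} (α : Fin n →₀ ℕ) (β : Fin n →₀ ℕ) (c : ℝ)
    (L : List (Fin n)) (hL : L.Nodup) :
    ((L.map fun i =>
      ((pderiv i : Derivation ℝ (MvPolynomial (Fin n) ℝ) (MvPolynomial (Fin n) ℝ)).toLinearMap) ^ (α i)).prod)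
      (monomial β c)
    = monomial (β - (L.map fun j => Finsupp.single j (α j)).sum)
        (c * (L.map fun j => ((β j).descFactorial (α j) : ℝ)).prod) := by
  induction L with
  | nil => simp
  | cons i L ih =>
    have hi : i ∉ L := (List.nodup_cons.mp hL).1
    rw [List.map_cons, List.prod_cons, Module.End.mul_apply, ih (List.nodup_cons.mp hL).2,
      pderiv_pow_monomial]
    congr 1
    · rw [List.map_cons, List.sum_cons, tsub_tsub, add_comm]
    · rw [List.map_cons, List.prod_cons]
      have : (β - (L.map fun j => Finsupp.single j (α j)).sum) i = β i := by
        rw [Finsupp.tsub_apply, list_single_sum_apply α L i hi, Nat.sub_zero]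
      rw [this]; ring

lemma pdPow_monomial {n : ℕ} (α β : Fin n →₀ ℕ) (c : ℝ) :
    pdPow α (monomial β c)
      = monomial (β - α) (c * ∏ i, ((β i).descFactorial (α i) : ℝ)) := by
  rw [pdPow, List.ofFn_eq_map, list_prod_pderiv_monomial α β c _ (List.nodup_finRange n)]
  have h1 : (List.map (fun j => Finsupp.single j (α j)) (List.finRange n)).sum = α := by
    rw [← List.ofFn_eq_map, List.sum_ofFn]
    ext i
    simp [Finsupp.finset_sum_apply, Finsupp.single_apply]
  have h2 : (List.map (fun j => ((β j).descFactorial (α j) : ℝ)) (List.finRange n)).prod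
      = ∏ i, ((β i).descFactorial (α i) : ℝ) := by
    rw [← List.ofFn_eq_map, List.prod_ofFn]
  rw [h1, h2]

lemma sum_eq_fin_sum {n : ℕ} (β : Fin n →₀ ℕ) : (β.sum fun _ e => e) = ∑ i, β i :=
  Finsupp.sum_fintype _ _ (fun _ => rfl)

lemma sum_tsub_add {n : ℕ} {α β : Fin n →₀ ℕ} (h : α ≤ β) :
    (∑ i, α i) + ∑ i, (β - α) i = ∑ i, β i := by
  rw [← Finset.sum_add_distrib]
  exact Finset.sum_congr rfl fun i _ => by
    rw [Finsupp.tsub_apply, Nat.add_sub_cancel' (h i)]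

lemma term_deg {n : ℕ} (Q : MvPolynomial (Fin n) ℝ) (α β : Fin n →₀ ℕ) (r : ℝ)
    (hQ : Q.totalDegree ≤ ∑ i, α i) :
    (Q * pdPow α (monomial β r)).totalDegree ≤ ∑ i, β i := by
  rw [pdPow_monomial]
  by_cases h : α ≤ β
  · refine (totalDegree_mul _ _).trans ?_
    have hm : (monomial (β - α) (r * ∏ i, ((β i).descFactorial (α i) : ℝ))).totalDegree
        ≤ ∑ i, (β - α) i := by
      refine (totalDegree_monomial_le _ _).trans ?_
      rw [Finsupp.sum_fintype _ _ (fun _ => rfl)]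
      rfl
    calc Q.totalDegree + _ ≤ (∑ i, α i) + ∑ i, (β - α) i := add_le_add hQ hm
      _ = ∑ i, β i := sum_tsub_add h
  · obtain ⟨i, hi⟩ : ∃ i, β i < α i := by
      rw [Finsupp.le_def] at h; push_neg at h; simpa using h
    have : (∏ j, ((β j).descFactorial (α j) : ℝ)) = 0 := by
      apply Finset.prod_eq_zero (Finset.mem_univ i)
      rw [Nat.descFactorial_eq_zero_iff_lt.mpr hi, Nat.cast_zero]
    rw [this, mul_zero, map_zero, mul_zero, totalDegree_zero]
    exact Nat.zero_le _

lemma mul_pdPow_deg {n : ℕ} (Q : MvPolynomial (Fin n) ℝ) (α : Fin n →₀ ℕ)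
    (hQ : Q.totalDegree ≤ ∑ i, α i) (p : MvPolynomial (Fin n) ℝ) (d : ℕ)
    (hp : p.totalDegree ≤ d) : (Q * pdPow α p).totalDegree ≤ d := by
  have hrep : Q * pdPow α p = ∑ β ∈ p.support, Q * pdPow α (monomial β (coeff β p)) := by
    conv_lhs => rw [← support_sum_monomial_coeff p]
    rw [map_sum, Finset.mul_sum]
  rw [hrep]
  refine (totalDegree_finset_sum _ _).trans (Finset.sup_le fun β hβ => ?_)
  refine (term_deg Q α β _ hQ).trans (le_trans ?_ hp)
  rw [← sum_eq_fin_sum]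
  exact le_totalDegree hβ

lemma T_monomial {n : ℕ} (T : MvPolynomial (Fin n) ℝ →ₗ[ℝ] MvPolynomial (Fin n) ℝ)
    (q : (Fin n →₀ ℕ) → MvPolynomial (Fin n) ℝ)
    (hq : ∀ p : MvPolynomial (Fin n) ℝ,
      (Function.support fun α => q α * pdPow α p).Finite ∧
      T p = ∑ᶠ α, q α * pdPow α p) (β : Fin n →₀ ℕ) :
    T (monomial β (1 : ℝ)) = ∑ α ∈ Finset.Iic β,
      q α * monomial (β - α) (∏ i, ((β i).descFactorial (α i) : ℝ)) := by
  rw [(hq _).2, finsum_eq_finset_sum_of_support_subset]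
  · exact Finset.sum_congr rfl fun α _ => by rw [pdPow_monomial, one_mul]
  · intro α hα
    simp only [Function.mem_support, Ne] at hα
    by_contra hle
    simp only [Finset.coe_Iic, Set.mem_Iic] at hle
    apply hα
    obtain ⟨i, hi⟩ : ∃ i, β i < α i := by
      rw [Finsupp.le_def] at hle; push_neg at hle; simpa using hle
    have : (∏ j, ((β j).descFactorial (α j) : ℝ)) = 0 := by
      apply Finset.prod_eq_zero (Finset.mem_univ i)
      rw [Nat.descFactorial_eq_zero_iff_lt.mpr hi, Nat.cast_zero]
    rw [pdPow_monomial, this, mul_zero, map_zero, mul_zero]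

lemma totalDegree_mul_C {n : ℕ} (Q : MvPolynomial (Fin n) ℝ) {c : ℝ} (hc : c ≠ 0) :
    (Q * C c).totalDegree = Q.totalDegree := by
  apply le_antisymm
  · exact (totalDegree_mul _ _).trans (by simp [totalDegree_C])
  · have : Q = (Q * C c) * C c⁻¹ := by
      rw [mul_assoc, ← C_mul, mul_inv_cancel₀ hc, C_1, mul_one]
    conv_lhs => rw [this]
    exact (totalDegree_mul _ _).trans (by simp [totalDegree_C])

/-- A linear map `T = Σ_α q_α ⬝ ∂^α` on `ℝ[x₁,…,xₙ]` preserves all the spaces of polynomials of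
total degree at most `d` if and only if `deg q_α ≤ |α|` for all `α ∈ ℕ₀ⁿ`. -/
theorem degree_preserving_iff (n : ℕ) (hn : 0 < n)
    (T : MvPolynomial (Fin n) ℝ →ₗ[ℝ] MvPolynomial (Fin n) ℝ)
    (q : (Fin n →₀ ℕ) → MvPolynomial (Fin n) ℝ)
    (hq : ∀ p : MvPolynomial (Fin n) ℝ,
      (Function.support fun α => q α * pdPow α p).Finite ∧
      T p = ∑ᶠ α, q α * pdPow α p) :
    (∀ d : ℕ, ∀ p : MvPolynomial (Fin n) ℝ, p.totalDegree ≤ d → (T p).totalDegree ≤ d) ↔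
    (∀ α : Fin n →₀ ℕ, (q α).totalDegree ≤ ∑ i, α i) := by
  constructor
  · intro hpres
    suffices H : ∀ N : ℕ, ∀ α : Fin n →₀ ℕ, (∑ i, α i) = N → (q α).totalDegree ≤ ∑ i, α i by
      exact fun α => H _ α rfl
    intro N
    induction N using Nat.strong_induction_on with
    | _ N ih =>
    intro α hN
    have hc0 : (∏ i, (((α i).descFactorial (α i)) : ℝ)) ≠ 0 := by
      apply Finset.prod_ne_zero_iff.mpr
      intro i _
      simp [Nat.descFactorial_self, Nat.factorial_ne_zero]
    have hTM := T_monomial T q hq α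
    rw [← Finset.add_sum_erase _ _ (Finset.mem_Iic.mpr le_rfl), tsub_self] at hTM
    have hkey : q α * monomial 0 (∏ i, (((α i).descFactorial (α i)) : ℝ))
        = T (monomial α 1) - ∑ β ∈ (Finset.Iic α).erase α,
            q β * monomial (α - β) (∏ i, ((α i).descFactorial (β i) : ℝ)) := by
      rw [hTM]; ring
    have hdegα : (monomial α (1 : ℝ)).totalDegree = ∑ i, α i := by
      rw [totalDegree_monomial _ one_ne_zero, sum_eq_fin_sum]
    have h1 : (T (monomial α 1)).totalDegree ≤ ∑ i, α i :=
      hpres _ _ hdegα.le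
    have h2 : (∑ β ∈ (Finset.Iic α).erase α,
        q β * monomial (α - β) (∏ i, ((α i).descFactorial (β i) : ℝ))).totalDegree
        ≤ ∑ i, α i := by
      refine (totalDegree_finset_sum _ _).trans (Finset.sup_le fun β hβ => ?_)
      obtain ⟨hne, hle⟩ := Finset.mem_erase.mp hβ
      rw [Finset.mem_Iic] at hle
      have hlt : (∑ i, β i) < ∑ i, α i := by
        obtain ⟨i, hi⟩ : ∃ i, β i < α i := by
          by_contra hcon
          push_neg at hcon
          exact hne (le_antisymm hle fun i => hcon i)
        exact Finset.sum_lt_sum (fun i _ => hle i) ⟨i, Finset.mem_univ i, hi⟩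
      have hqβ : (q β).totalDegree ≤ ∑ i, β i := ih _ (hN ▸ hlt) β rfl
      refine (totalDegree_mul _ _).trans ?_
      have hm : (monomial (α - β) (∏ i, ((α i).descFactorial (β i) : ℝ))).totalDegree
          ≤ ∑ i, (α - β) i := by
        refine (totalDegree_monomial_le _ _).trans ?_
        rw [Finsupp.sum_fintype _ _ (fun _ => rfl)]
        rfl
      calc (q β).totalDegree + _ ≤ (∑ i, β i) + ∑ i, (α - β) i := add_le_add hqβ hm
        _ = ∑ i, α i := sum_tsub_add hle
    calc (q α).totalDegree
        = (q α * C (∏ i, (((α i).descFactorial (α i)) : ℝ))).totalDegree :=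
          (totalDegree_mul_C _ hc0).symm
      _ = (q α * monomial 0 (∏ i, (((α i).descFactorial (α i)) : ℝ))).totalDegree := by
          rw [C_apply]
      _ ≤ _ := by
          rw [hkey]
          exact (totalDegree_sub _ _).trans (max_le h1 h2)
  · intro hdeg d p hp
    rw [(hq p).2, finsum_eq_sum _ (hq p).1]
    refine (totalDegree_finset_sum _ _).trans (Finset.sup_le fun α _ => ?_)
    exact mul_pdPow_deg _ _ (hdeg α) _ _ hp
end

section
/- Let n ∈ ℕ and let T : ℝ[x₁,…,xₙ] → ℝ[x₁,…,xₙ] be a linear map. Then the following are equivalent: (i) T is diagonal, i.e., there exists a real sequence (t_α)_{α∈ℕ₀ⁿ} with T x^α = t_α · x^α for all α ∈ ℕ₀ⁿ; (ii) there exists a unique real sequence (c_α)_{α∈ℕ₀ⁿ} such that T p = Σ_{α∈ℕ₀ⁿ} (c_α/α!) · x^α · ∂^α p for all p ∈ ℝ[x₁,…,xₙ] (for each p the sum is finite). Moreover, if these hold, the sequences are related by t_α = Σ_{β ≤ α} C(α,β) · c_β and c_α = Σ_{β ≤ α} (−1)^{|α−β|} · C(α,β) · t_β for all α ∈ ℕ₀ⁿ,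 where β ≤ α means β_j ≤ α_j for all j and C(α,β) = Π_j C(α_j,β_j) is the product of binomial coefficients. -/
open MvPolynomial MeasureTheory

namespace DiagRepAux

variable {n : ℕ}

lemma pd_single_pow (i : Fin n) (k : ℕ) (δ : Fin n →₀ ℕ) (r : ℝ) :
    (((pderiv i : Derivation ℝ (MvPolynomial (Fin n) ℝ) (MvPolynomial (Fin n) ℝ)).toLinearMap) ^ k)
      (monomial δ r)
      = ((δ i).descFactorial k : ℝ) • monomial (δ - Finsupp.single i k) r := by
  induction k generalizing δ with
  | zero => simp
  | succ k ih =>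
      rw [pow_succ, Module.End.mul_apply]
      have h1 : (pderiv i).toLinearMap (monomial δ r) = monomial (δ - Finsupp.single i 1) (r * δ i) := by
        simpa using pderiv_monomial (i := i) (s := δ) (a := r)
      rw [h1]
      have h2 : monomial (δ - Finsupp.single i 1) (r * (δ i : ℝ)) =
          ((δ i : ℝ)) • monomial (δ - Finsupp.single i 1) r := by
        rw [smul_monomial, smul_eq_mul, mul_comm]
      rw [h2, LinearMap.map_smul, ih _, smul_smul]
      have h3 : (δ - Finsupp.single i 1 : Fin n →₀ ℕ) i = δ i - 1 := by
        simp [Finsupp.tsub_apply]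
      rw [h3]
      have h4 : δ - Finsupp.single i 1 - Finsupp.single i k = δ - Finsupp.single i (k + 1) := by
        rw [tsub_tsub, ← Finsupp.single_add, add_comm]
      rw [h4]
      congr 1
      have h5 : δ i * (δ i - 1).descFactorial k = (δ i).descFactorial (k + 1) := by
        cases h : δ i with
        | zero => simp
        | succ m => rw [Nat.succ_descFactorial_succ]; simp
      push_cast [← h5]
      ring

lemma univ_sum_single (α : Fin n →₀ ℕ) : ∑ i, Finsupp.single i (α i) = α := by
  ext j
  rw [Finsupp.finset_sum_apply]
  simp [Finsupp.single_apply]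

lemma list_pd (α : Fin n →₀ ℕ) (r : ℝ) (l : List (Fin n)) (hl : l.Nodup) (γ : Fin n →₀ ℕ) :
    (l.map fun i =>
      ((pderiv i : Derivation ℝ (MvPolynomial (Fin n) ℝ) (MvPolynomial (Fin n) ℝ)).toLinearMap)
        ^ (α i)).prod (monomial γ r)
    = ((∏ i ∈ l.toFinset, (γ i).descFactorial (α i) : ℕ) : ℝ) •
        monomial (γ - ∑ i ∈ l.toFinset, Finsupp.single i (α i)) r := by
  induction l with
  | nil => simp
  | cons i l ih =>
      have hnd := List.nodup_cons.mp hl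
      have hil : i ∉ l.toFinset := by simpa using hnd.1
      rw [List.map_cons, List.prod_cons, Module.End.mul_apply, ih hnd.2, LinearMap.map_smul,
        pd_single_pow]
      set S : Fin n →₀ ℕ := ∑ j ∈ l.toFinset, Finsupp.single j (α j) with hS
      have hSi : S i = 0 := by
        rw [hS, Finsupp.finset_sum_apply]
        refine Finset.sum_eq_zero fun j hj => ?_
        exact Finsupp.single_apply_eq_zero.mpr (fun h => absurd (h ▸ hj) hil)
      have hγ'i : (γ - S : Fin n →₀ ℕ) i = γ i := by
        simp [Finsupp.tsub_apply, hSi]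
      rw [hγ'i, smul_smul]
      have htf : (i :: l).toFinset = insert i l.toFinset := by simp
      rw [htf, Finset.prod_insert hil, Finset.sum_insert hil]
      congr 1
      · push_cast; ring
      · rw [tsub_tsub, add_comm]

lemma pdPow_monomial (α γ : Fin n →₀ ℕ) (r : ℝ) :
    pdPow α (monomial γ r)
      = ((∏ i, (γ i).descFactorial (α i) : ℕ) : ℝ) • monomial (γ - α) r := by
  have h := list_pd α r (List.finRange n) (List.nodup_finRange n) γ
  rw [pdPow, List.ofFn_eq_map]
  simpa [List.toFinset_finRange, univ_sum_single] using h

lemma factorial_prod_ne (α : Fin n →₀ ℕ) : (∏ i, ((α i).factorial : ℝ)) ≠ 0 := by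
  positivity

lemma term_monomial (cα : ℝ) (α γ : Fin n →₀ ℕ) (r : ℝ) :
    (cα / ∏ i, ((α i).factorial : ℝ)) • (monomial α (1:ℝ) * pdPow α (monomial γ r))
    = (cα * ∏ i, (((γ i).choose (α i) : ℝ))) • monomial (α + (γ - α)) r := by
  rw [pdPow_monomial, Algebra.mul_smul_comm, monomial_mul, one_mul, smul_smul]
  congr 1
  have hD : ((∏ i, (γ i).descFactorial (α i) : ℕ) : ℝ)
      = (∏ i, ((α i).factorial : ℝ)) * ∏ i, (((γ i).choose (α i) : ℝ)) := by
    push_cast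
    rw [← Finset.prod_mul_distrib]
    exact Finset.prod_congr rfl fun i _ => by
      push_cast [Nat.descFactorial_eq_factorial_mul_choose]; ring
  rw [hD]
  have hF := factorial_prod_ne α
  field_simp

lemma choose_prod_eq_zero {α γ : Fin n →₀ ℕ} (h : ¬ α ≤ γ) :
    (∏ i, (((γ i).choose (α i) : ℝ))) = 0 := by
  rw [Finsupp.le_def] at h
  push_neg at h
  obtain ⟨i, hi⟩ := h
  exact Finset.prod_eq_zero (Finset.mem_univ i) (by
    rw [Nat.choose_eq_zero_of_lt hi]; norm_num)

lemma gen_formula (c : (Fin n →₀ ℕ) → ℝ) (p : MvPolynomial (Fin n) ℝ) :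
    ∑ᶠ α, (c α / ∏ i, ((α i).factorial : ℝ)) • (monomial α (1:ℝ) * pdPow α p)
    = ∑ γ ∈ p.support,
        (∑ β ∈ Finset.Iic γ, (∏ i, (((γ i).choose (β i) : ℝ))) * c β) •
          monomial γ (coeff γ p) := by
  classical
  set s := p.support.sup id with hs
  have hterm : ∀ α, (c α / ∏ i, ((α i).factorial : ℝ)) • (monomial α (1:ℝ) * pdPow α p)
      = ∑ γ ∈ p.support, (c α * ∏ i, (((γ i).choose (α i) : ℝ))) •
          monomial (α + (γ - α)) (coeff γ p) := by
    intro α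
    conv_lhs => rw [p.as_sum]
    rw [map_sum, Finset.mul_sum, Finset.smul_sum]
    exact Finset.sum_congr rfl fun γ _ => term_monomial _ _ _ _
  have hsupp : (Function.support fun α =>
      (c α / ∏ i, ((α i).factorial : ℝ)) • (monomial α (1:ℝ) * pdPow α p))
      ⊆ ↑(Finset.Iic s) := by
    intro α hα
    simp only [Finset.coe_Iic, Set.mem_Iic]
    by_contra hle
    apply hα
    show (c α / ∏ i, ((α i).factorial : ℝ)) • (monomial α (1:ℝ) * pdPow α p) = 0
    rw [hterm]
    refine Finset.sum_eq_zero fun γ hγ => ?_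
    have : ¬ α ≤ γ := fun h => hle (h.trans (Finset.le_sup (f := id) hγ))
    rw [choose_prod_eq_zero this, mul_zero, zero_smul]
  rw [finsum_eq_sum_of_support_subset _ hsupp]
  simp_rw [hterm]
  rw [Finset.sum_comm]
  refine Finset.sum_congr rfl fun γ hγ => ?_
  have hγs : γ ≤ s := Finset.le_sup (f := id) hγ
  rw [← Finset.sum_subset (Finset.Iic_subset_Iic.mpr hγs)
    (fun α _ hα => by
      rw [choose_prod_eq_zero (by simpa using hα), mul_zero, zero_smul])]
  rw [Finset.sum_smul]
  refine Finset.sum_congr rfl fun α hα => ?_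
  rw [add_tsub_cancel_of_le (Finset.mem_Iic.mp hα), mul_comm]

lemma fact_Icc (f : Fin n → ℕ → ℝ) (δ α : Fin n →₀ ℕ) :
    ∑ β ∈ Finset.Icc δ α, ∏ i, f i (β i)
      = ∏ i, ∑ b ∈ Finset.Icc (δ i) (α i), f i b := by
  classical
  rw [Finset.prod_univ_sum]
  refine Finset.sum_nbij' (fun β => Finsupp.equivFunOnFinite β)
    (fun g => Finsupp.equivFunOnFinite.symm g) ?_ ?_ ?_ ?_ ?_
  · intro β hβ
    rw [Finset.mem_Icc] at hβ
    rw [Fintype.mem_piFinset]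
    intro i
    rw [Finset.mem_Icc]
    exact ⟨(Finsupp.le_def.mp hβ.1) i, (Finsupp.le_def.mp hβ.2) i⟩
  · intro g hg
    rw [Fintype.mem_piFinset] at hg
    rw [Finset.mem_Icc]
    have hco : ∀ i, (Finsupp.equivFunOnFinite.symm g) i = g i := fun i => rfl
    constructor <;> rw [Finsupp.le_def] <;> intro i <;> rw [hco i]
    · exact (Finset.mem_Icc.mp (hg i)).1
    · exact (Finset.mem_Icc.mp (hg i)).2
  · intro β hβ; exact Finsupp.equivFunOnFinite.symm_apply_apply β
  · intro g hg; exact Finsupp.equivFunOnFinite.apply_symm_apply g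
  · intro β hβ; rfl

lemma alt_sum (k : ℕ) :
    ∑ e ∈ Finset.range (k+1), (-1:ℝ)^e * k.choose e = if k = 0 then 1 else 0 := by
  have h := Int.alternating_sum_range_choose (n := k)
  exact_mod_cast h

lemma alt_sum' (k : ℕ) :
    ∑ e ∈ Finset.range (k+1), (-1:ℝ)^(k-e) * k.choose e = if k = 0 then 1 else 0 := by
  rw [← alt_sum k, ← Finset.sum_range_reflect]
  refine Finset.sum_congr rfl fun e he => ?_
  rw [Finset.mem_range] at he
  have he' : e ≤ k := Nat.lt_succ_iff.mp he
  have h1 : k + 1 - 1 - e = k - e := by omega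
  have h2 : k - (k - e) = e := by omega
  rw [h1, h2, Nat.choose_symm he']

lemma or1d (m j : ℕ) (sg : Bool) :
    ∑ b ∈ Finset.Icc j m,
      (-1:ℝ)^(if sg then m - b else b - j) * (m.choose b) * (b.choose j)
      = if j = m then 1 else 0 := by
  rcases le_or_gt j m with hjm | hjm
  · have hre : Finset.Icc j m = Finset.Ico j (m+1) := (Finset.Ico_add_one_right_eq_Icc j m).symm
    rw [hre, Finset.sum_Ico_eq_sum_range]
    have hmj : m + 1 - j = (m - j) + 1 := by omega
    rw [hmj]
    have step : ∀ e ∈ Finset.range ((m - j) + 1),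
        (-1:ℝ)^(if sg then m - (j+e) else (j+e) - j) * (m.choose (j+e)) * ((j+e).choose j)
        = (m.choose j : ℝ) * ((-1:ℝ)^(if sg then (m-j) - e else e) * ((m-j).choose e)) := by
      intro e he
      rw [Finset.mem_range] at he
      have he' : e ≤ m - j := Nat.lt_succ_iff.mp he
      have hbm : j + e ≤ m := by omega
      have hjb : j ≤ j + e := Nat.le_add_right j e
      have htri := Nat.choose_mul (n := m) hjb
      have h3 : j + e - j = e := by omega
      rw [h3] at htri
      have h4 : m - (j + e) = (m - j) - e := by omega
      have hcast : (m.choose (j+e) : ℝ) * ((j+e).choose j) = (m.choose j : ℝ) * ((m-j).choose e) := by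
        exact_mod_cast congrArg (Nat.cast : ℕ → ℝ) htri
      cases sg <;> simp only [if_true, if_false, Bool.false_eq_true, h3, h4] <;>
        rw [mul_assoc, hcast] <;> ring
    rw [Finset.sum_congr rfl step, ← Finset.mul_sum]
    have hval : ∑ e ∈ Finset.range ((m-j)+1),
        (-1:ℝ)^(if sg then (m-j) - e else e) * ((m-j).choose e)
        = if m - j = 0 then 1 else 0 := by
      cases sg
      · simpa using alt_sum (m-j)
      · simpa using alt_sum' (m-j)
    rw [hval]
    rcases eq_or_ne j m with h | h
    · simp [h]
    · have h0 : m - j ≠ 0 := by omega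
      simp [h0, h]
  · rw [Finset.Icc_eq_empty (by omega), Finset.sum_empty, if_neg (by omega)]

lemma orMV (α δ : Fin n →₀ ℕ) (sg : Bool) :
    ∑ β ∈ Finset.Icc δ α,
      (-1:ℝ)^(if sg then ∑ i, (α i - β i) else ∑ i, (β i - δ i)) *
        (∏ i, (((α i).choose (β i) : ℝ))) * (∏ i, (((β i).choose (δ i) : ℝ)))
      = if δ = α then 1 else 0 := by
  have hterm : ∀ β ∈ Finset.Icc δ α,
      (-1:ℝ)^(if sg then ∑ i, (α i - β i) else ∑ i, (β i - δ i)) *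
        (∏ i, (((α i).choose (β i) : ℝ))) * (∏ i, (((β i).choose (δ i) : ℝ)))
      = ∏ i, ((-1:ℝ)^(if sg then α i - β i else β i - δ i) *
          ((α i).choose (β i)) * ((β i).choose (δ i))) := by
    intro β _
    cases sg <;> simp only [if_true, Bool.false_eq_true, if_false] <;>
      rw [Finset.prod_mul_distrib, Finset.prod_mul_distrib, ← Finset.prod_pow_eq_pow_sum]
  rw [Finset.sum_congr rfl hterm, fact_Icc (fun i b =>
    (-1:ℝ)^(if sg then α i - b else b - δ i) * ((α i).choose b) * (b.choose (δ i))) δ α]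
  have hfac : ∀ i : Fin n, ∑ b ∈ Finset.Icc (δ i) (α i),
      (-1:ℝ)^(if sg then α i - b else b - δ i) * ((α i).choose b) * (b.choose (δ i))
      = if δ i = α i then 1 else 0 := fun i => or1d (α i) (δ i) sg
  rw [Finset.prod_congr rfl (fun i _ => hfac i)]
  rcases eq_or_ne δ α with h | h
  · simp [h]
  · rw [if_neg h]
    have : ∃ i, δ i ≠ α i := by
      by_contra hc
      push_neg at hc
      exact h (Finsupp.ext hc)
    obtain ⟨i, hi⟩ := this
    exact Finset.prod_eq_zero (Finset.mem_univ i) (if_neg hi)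

lemma id_inv (c : (Fin n →₀ ℕ) → ℝ) (α : Fin n →₀ ℕ) :
    ∑ β ∈ Finset.Iic α, (-1:ℝ)^(∑ i, (α i - β i)) * (∏ i, (((α i).choose (β i) : ℝ))) *
      (∑ δ ∈ Finset.Iic β, (∏ i, (((β i).choose (δ i) : ℝ))) * c δ) = c α := by
  classical
  simp_rw [Finset.mul_sum]
  rw [Finset.sum_comm' (s' := fun δ => Finset.Icc δ α) (t' := Finset.Iic α)
    (fun β δ => by
      simp only [Finset.mem_Iic, Finset.mem_Icc]
      constructor
      · rintro ⟨h1, h2⟩; exact ⟨⟨h2, h1⟩, h2.trans h1⟩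
      · rintro ⟨⟨h1, h2⟩, h3⟩; exact ⟨h2, h1⟩)]
  have hin : ∀ δ ∈ Finset.Iic α,
      ∑ β ∈ Finset.Icc δ α, (-1:ℝ)^(∑ i, (α i - β i)) * (∏ i, (((α i).choose (β i) : ℝ))) *
        ((∏ i, (((β i).choose (δ i) : ℝ))) * c δ)
      = (if δ = α then 1 else 0) * c δ := by
    intro δ _
    rw [← orMV α δ true, Finset.sum_mul]
    refine Finset.sum_congr rfl fun β _ => ?_
    simp only [if_true]
    ring
  rw [Finset.sum_congr rfl hin]
  simp

lemma id_fwd (t : (Fin n →₀ ℕ) → ℝ) (α : Fin n →₀ ℕ) :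
    ∑ β ∈ Finset.Iic α, (∏ i, (((α i).choose (β i) : ℝ))) *
      (∑ δ ∈ Finset.Iic β, (-1:ℝ)^(∑ i, (β i - δ i)) * (∏ i, (((β i).choose (δ i) : ℝ))) * t δ)
      = t α := by
  classical
  simp_rw [Finset.mul_sum]
  rw [Finset.sum_comm' (s' := fun δ => Finset.Icc δ α) (t' := Finset.Iic α)
    (fun β δ => by
      simp only [Finset.mem_Iic, Finset.mem_Icc]
      constructor
      · rintro ⟨h1, h2⟩; exact ⟨⟨h2, h1⟩, h2.trans h1⟩
      · rintro ⟨⟨h1, h2⟩, h3⟩; exact ⟨h2, h1⟩)]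
  have hin : ∀ δ ∈ Finset.Iic α,
      ∑ β ∈ Finset.Icc δ α, (∏ i, (((α i).choose (β i) : ℝ))) *
        ((-1:ℝ)^(∑ i, (β i - δ i)) * (∏ i, (((β i).choose (δ i) : ℝ))) * t δ)
      = (if δ = α then 1 else 0) * t δ := by
    intro δ _
    rw [← orMV α δ false, Finset.sum_mul]
    refine Finset.sum_congr rfl fun β _ => ?_
    simp only [Bool.false_eq_true, if_false]
    ring
  rw [Finset.sum_congr rfl hin]
  simp

lemma smul_mono_inj {a b : ℝ} (γ : Fin n →₀ ℕ)
    (h : a • monomial γ (1:ℝ) = b • monomial γ 1) : a = b := by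
  have := congrArg (coeff γ) h
  simpa [coeff_smul, coeff_monomial] using this

lemma rep_monomial (T : MvPolynomial (Fin n) ℝ →ₗ[ℝ] MvPolynomial (Fin n) ℝ)
    (c : (Fin n →₀ ℕ) → ℝ)
    (hc : ∀ p : MvPolynomial (Fin n) ℝ,
      T p = ∑ᶠ α, (c α / ∏ i, ((α i).factorial : ℝ)) • (monomial α (1 : ℝ) * pdPow α p))
    (γ : Fin n →₀ ℕ) :
    T (monomial γ (1:ℝ))
      = (∑ β ∈ Finset.Iic γ, (∏ i, (((γ i).choose (β i) : ℝ))) * c β) • monomial γ 1 := by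
  rw [hc (monomial γ 1), gen_formula]
  rw [support_monomial]
  simp

end DiagRepAux

open DiagRepAux

/-- A linear map `T` on `ℝ[x₁,…,xₙ]` is diagonal (`T x^α = t_α ⬝ x^α`) if and only if it has a
representation `T = Σ_α (c_α/α!) ⬝ x^α ⬝ ∂^α` with a unique real sequence `(c_α)_α`; moreover the
two sequences are related by the binomial/inverse-binomial transform. -/
theorem diagonal_representation (n : ℕ) (hn : 0 < n)
    (T : MvPolynomial (Fin n) ℝ →ₗ[ℝ] MvPolynomial (Fin n) ℝ) :
    ((∃ t : (Fin n →₀ ℕ) → ℝ,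
        ∀ α : Fin n →₀ ℕ, T (monomial α (1 : ℝ)) = t α • monomial α (1 : ℝ)) ↔
      (∃! c : (Fin n →₀ ℕ) → ℝ, ∀ p : MvPolynomial (Fin n) ℝ,
        T p = ∑ᶠ α, (c α / ∏ i, ((α i).factorial : ℝ)) • (monomial α (1 : ℝ) * pdPow α p))) ∧
    (∀ (t c : (Fin n →₀ ℕ) → ℝ),
      (∀ α : Fin n →₀ ℕ, T (monomial α (1 : ℝ)) = t α • monomial α (1 : ℝ)) →
      (∀ p : MvPolynomial (Fin n) ℝ,
        T p = ∑ᶠ α, (c α / ∏ i, ((α i).factorial : ℝ)) • (monomial α (1 : ℝ) * pdPow α p)) →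
      (∀ α : Fin n →₀ ℕ,
        t α = ∑ β ∈ Finset.Iic α, (∏ i, ((α i).choose (β i)) : ℝ) * c β) ∧
      (∀ α : Fin n →₀ ℕ,
        c α = ∑ β ∈ Finset.Iic α,
          (-1 : ℝ) ^ (∑ i, (α i - β i)) * (∏ i, ((α i).choose (β i)) : ℝ) * t β)) := by
  -- key fact: if c represents T, then T is diagonal with eigenvalues the binomial transform of c
  have key : ∀ (t c : (Fin n →₀ ℕ) → ℝ),
      (∀ α : Fin n →₀ ℕ, T (monomial α (1 : ℝ)) = t α • monomial α (1 : ℝ)) →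
      (∀ p : MvPolynomial (Fin n) ℝ,
        T p = ∑ᶠ α, (c α / ∏ i, ((α i).factorial : ℝ)) • (monomial α (1 : ℝ) * pdPow α p)) →
      ∀ γ : Fin n →₀ ℕ,
        t γ = ∑ β ∈ Finset.Iic γ, (∏ i, (((γ i).choose (β i) : ℝ))) * c β := by
    intro t c ht hc γ
    exact smul_mono_inj γ ((ht γ).symm.trans (rep_monomial T c hc γ))
  constructor
  · constructor
    · rintro ⟨t, ht⟩
      refine ⟨fun α => ∑ β ∈ Finset.Iic α,
        (-1:ℝ)^(∑ i, (α i - β i)) * (∏ i, (((α i).choose (β i) : ℝ))) * t β, ?_, ?_⟩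
      · intro p
        rw [gen_formula]
        have hfwd : ∀ γ : Fin n →₀ ℕ,
            (∑ β ∈ Finset.Iic γ, (∏ i, (((γ i).choose (β i) : ℝ))) *
              (∑ δ ∈ Finset.Iic β,
                (-1:ℝ)^(∑ i, (β i - δ i)) * (∏ i, (((β i).choose (δ i) : ℝ))) * t δ)) = t γ :=
          id_fwd t
        have hcong : ∀ γ ∈ p.support,
            (∑ β ∈ Finset.Iic γ, (∏ i, (((γ i).choose (β i) : ℝ))) *
              (∑ δ ∈ Finset.Iic β,
                (-1:ℝ)^(∑ i, (β i - δ i)) * (∏ i, (((β i).choose (δ i) : ℝ))) * t δ)) •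
              (monomial γ (coeff γ p) : MvPolynomial (Fin n) ℝ)
            = t γ • monomial γ (coeff γ p) := fun γ _ => by rw [hfwd γ]
        rw [Finset.sum_congr rfl hcong]
        conv_lhs => rw [p.as_sum, map_sum]
        refine Finset.sum_congr rfl fun γ _ => ?_
        have h1 : (monomial γ (coeff γ p) : MvPolynomial (Fin n) ℝ)
            = coeff γ p • monomial γ 1 := by
          rw [smul_monomial, smul_eq_mul, mul_one]
        rw [h1, LinearMap.map_smul, ht γ, smul_smul, smul_smul, mul_comm]
      · intro c' hc'
        funext α
        have hrel : ∀ γ : Fin n →₀ ℕ,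
            t γ = ∑ β ∈ Finset.Iic γ, (∏ i, (((γ i).choose (β i) : ℝ))) * c' β :=
          key t c' ht hc'
        have := id_inv c' α
        calc c' α = ∑ β ∈ Finset.Iic α,
              (-1:ℝ)^(∑ i, (α i - β i)) * (∏ i, (((α i).choose (β i) : ℝ))) *
                (∑ δ ∈ Finset.Iic β, (∏ i, (((β i).choose (δ i) : ℝ))) * c' δ) :=
            (id_inv c' α).symm
          _ = ∑ β ∈ Finset.Iic α,
              (-1:ℝ)^(∑ i, (α i - β i)) * (∏ i, (((α i).choose (β i) : ℝ))) * t β := by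
            refine Finset.sum_congr rfl fun β _ => ?_
            rw [← hrel β]
    · rintro ⟨c, hc, -⟩
      exact ⟨fun γ => ∑ β ∈ Finset.Iic γ, (∏ i, (((γ i).choose (β i) : ℝ))) * c β,
        fun γ => rep_monomial T c hc γ⟩
  · intro t c ht hc
    have hrel := key t c ht hc
    refine ⟨hrel, fun α => ?_⟩
    calc c α = ∑ β ∈ Finset.Iic α,
          (-1:ℝ)^(∑ i, (α i - β i)) * (∏ i, (((α i).choose (β i) : ℝ))) *
            (∑ δ ∈ Finset.Iic β, (∏ i, (((β i).choose (δ i) : ℝ))) * c δ) :=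
        (id_inv c α).symm
      _ = ∑ β ∈ Finset.Iic α,
          (-1:ℝ)^(∑ i, (α i - β i)) * (∏ i, (((α i).choose (β i) : ℝ))) * t β := by
        refine Finset.sum_congr rfl fun β _ => ?_
        rw [← hrel β]
end

section
/- Let n ∈ ℕ and let A : ℝ[x₁,…,xₙ] → ℝ[x₁,…,xₙ] be a linear map. Then the following are equivalent: (ii) for every α ∈ ℕ₀ⁿ, sup_{k∈ℕ₀} deg(A^k x^α) < ∞; (iii) for every p ∈ ℝ[x₁,…,xₙ], sup_{k∈ℕ₀} deg(A^k p) < ∞; (iv) there exist subvector spaces V_i ⊆ ℝ[x₁,…,xₙ], i ∈ ℕ₀, such that (a) dim V_i < ∞ for all i, (b) ⋃_{i∈ℕ₀} V_i = ℝ[x₁,…,xₙ], and (c) A V_i ⊆ V_i for all i. -/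
open MvPolynomial MeasureTheory

/-- Every finite-dimensional subspace of polynomials has uniformly bounded total degree. -/
lemma exists_degree_bound {n : ℕ} (V : Submodule ℝ (MvPolynomial (Fin n) ℝ))
    (hV : FiniteDimensional ℝ V) : ∃ D : ℕ, ∀ q ∈ V, q.totalDegree ≤ D := by
  obtain ⟨s, hs⟩ := (Submodule.fg_iff_finiteDimensional V).mpr hV
  refine ⟨s.sup MvPolynomial.totalDegree, fun q hq => ?_⟩
  rw [← hs] at hq
  obtain ⟨f, -, rfl⟩ := Submodule.mem_span_finset.mp hq
  refine totalDegree_finsetSum_le fun i hi => ?_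
  exact (totalDegree_smul_le _ _).trans (Finset.le_sup hi)

/-- Characterization of the linear maps `A` on `ℝ[x₁,…,xₙ]` for which `e^{tA}` is well-defined:
boundedness of `deg(A^k x^α)` in `k` for all monomials, boundedness of `deg(A^k p)` in `k` for
all polynomials, and the existence of an exhausting family of finite-dimensional
`A`-invariant subspaces are all equivalent. -/
theorem generator_characterization (n : ℕ) (hn : 0 < n)
    (A : Module.End ℝ (MvPolynomial (Fin n) ℝ)) :
    ((∀ α : Fin n →₀ ℕ, ∃ D : ℕ, ∀ k : ℕ,
        ((A ^ k) (monomial α (1 : ℝ))).totalDegree ≤ D) ↔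
      (∀ p : MvPolynomial (Fin n) ℝ, ∃ D : ℕ, ∀ k : ℕ, ((A ^ k) p).totalDegree ≤ D)) ∧
    ((∀ p : MvPolynomial (Fin n) ℝ, ∃ D : ℕ, ∀ k : ℕ, ((A ^ k) p).totalDegree ≤ D) ↔
      (∃ V : ℕ → Submodule ℝ (MvPolynomial (Fin n) ℝ),
        (∀ i, FiniteDimensional ℝ (V i)) ∧
        (⋃ i, (V i : Set (MvPolynomial (Fin n) ℝ))) = Set.univ ∧
        (∀ i, (V i).map A ≤ V i))) := by
  classical
  constructor
  · constructor
    · -- monomials → all polynomials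
      intro hm p
      choose D hD using hm
      refine ⟨p.support.sup D, fun k => ?_⟩
      have hp : (A ^ k) p = ∑ α ∈ p.support, (p.coeff α) • (A ^ k) (monomial α (1 : ℝ)) := by
        have hmono : ∀ α : Fin n →₀ ℕ,
            monomial α (p.coeff α) = (p.coeff α) • monomial α (1 : ℝ) := by
          intro α; rw [smul_monomial, smul_eq_mul, mul_one]
        conv_lhs => rw [p.as_sum]
        rw [map_sum]
        refine Finset.sum_congr rfl fun α _ => ?_
        rw [hmono α, LinearMap.map_smul]
      rw [hp]
      refine totalDegree_finsetSum_le fun α hα => ?_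
      exact (totalDegree_smul_le _ _).trans ((hD α k).trans (Finset.le_sup hα))
    · intro h α
      exact h (monomial α 1)
  · constructor
    · -- bounded degrees → invariant exhaustion
      intro h
      choose D hD using h
      obtain ⟨f, hf⟩ := exists_surjective_nat (Fin n →₀ ℕ)
      set W : (Fin n →₀ ℕ) → Submodule ℝ (MvPolynomial (Fin n) ℝ) := fun α =>
        Submodule.span ℝ (Set.range fun k : ℕ => (A ^ k) (monomial α (1 : ℝ))) with hW
      have hWfd : ∀ α, FiniteDimensional ℝ (W α) := by
        intro α
        have hle : W α ≤ restrictTotalDegree (Fin n) ℝ (D (monomial α 1)) := by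
          rw [hW, Submodule.span_le]
          rintro _ ⟨k, rfl⟩
          exact (mem_restrictTotalDegree _ _ _).mpr (hD (monomial α 1) k)
        exact Submodule.finiteDimensional_of_le hle
      have hWinv : ∀ α, (W α).map A ≤ W α := by
        intro α
        rw [hW, Submodule.map_span_le]
        rintro _ ⟨k, rfl⟩
        have : A ((A ^ k) (monomial α (1 : ℝ))) = (A ^ (k + 1)) (monomial α (1 : ℝ)) := by
          rw [pow_succ', Module.End.mul_apply]
        rw [this]
        exact Submodule.subset_span ⟨k + 1, rfl⟩
      refine ⟨fun i => (Finset.range (i + 1)).sup fun j => W (f j), ?_, ?_, ?_⟩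
      · intro i; infer_instance
      · rw [Set.eq_univ_iff_forall]
        intro p
        simp only [Set.mem_iUnion, SetLike.mem_coe]
        refine ⟨p.support.sup fun α => Function.surjInv hf α, ?_⟩
        have hmem : ∑ α ∈ p.support, monomial α (p.coeff α) ∈
            (Finset.range ((p.support.sup fun α => Function.surjInv hf α) + 1)).sup
              fun j => W (f j) := by
          refine Submodule.sum_mem _ fun α hα => ?_
          have h1 : monomial α (1 : ℝ) ∈ W α := by
            refine Submodule.subset_span ⟨0, ?_⟩
            simp
          have h2 : W α ≤
              (Finset.range ((p.support.sup fun β => Function.surjInv hf β) + 1)).sup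
                fun j => W (f j) := by
            have hj : Function.surjInv hf α ∈
                Finset.range ((p.support.sup fun β => Function.surjInv hf β) + 1) := by
              rw [Finset.mem_range, Nat.lt_succ_iff]
              exact Finset.le_sup hα
            have := Finset.le_sup (f := fun j => W (f j)) hj
            simpa [Function.surjInv_eq hf α] using this
          have hc : monomial α (p.coeff α) = (p.coeff α) • monomial α (1 : ℝ) := by
            rw [smul_monomial, smul_eq_mul, mul_one]
          rw [hc]
          exact Submodule.smul_mem _ _ (h2 h1)
        rwa [← p.as_sum] at hmem
      · intro i
        rw [Submodule.map_le_iff_le_comap]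
        refine Finset.sup_le fun j hj => ?_
        rw [← Submodule.map_le_iff_le_comap]
        exact le_trans (hWinv (f j)) (Finset.le_sup (f := fun j => W (f j)) hj)
    · -- invariant exhaustion → bounded degrees
      rintro ⟨V, hfd, huniv, hinv⟩ p
      have hp : p ∈ ⋃ i, (V i : Set (MvPolynomial (Fin n) ℝ)) := huniv ▸ Set.mem_univ p
      obtain ⟨i, hi⟩ := Set.mem_iUnion.mp hp
      obtain ⟨Dk, hDk⟩ := exists_degree_bound (V i) (hfd i)
      refine ⟨Dk, fun k => hDk _ ?_⟩
      induction k with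
      | zero => simpa using hi
      | succ k ih =>
          have : (A ^ (k + 1)) p = A ((A ^ k) p) := by rw [pow_succ', Module.End.mul_apply]
          rw [this]
          exact hinv i ⟨_, ih, rfl⟩
end
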